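/- Let n ≥ 1, h > 0, M ≥ 0, b > 0 and θ ∈ ℝ. Suppose φ : ℝ → ℝ is (n−1)-times continuously differentiable on [θ, θ + n·h] with its (n−1)-st derivative differentiable on (θ, θ + n·h), and |φ^{(n)}(ξ)| ≤ M · b^n for all ξ ∈ (θ, θ + n·h). Then |∑_{k=0}^{n} (−1)^k · C(n,k) · φ(θ + k·h)| ≤ M · b^n · (h^n / n!) · ∑_{k=1}^{n} k^n · C(n,k) ≤ M · b^n · (2·n·h)^n / n!. -/

import Mathlib

open Set

lemma altA : ∀ (n : ℕ) (j : ℕ), j < n →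
    ∑ k ∈ Finset.range (n + 1), (-1 : ℝ) ^ k * (n.choose k : ℝ) * (k : ℝ) ^ j = 0 := by
  intro n
  induction n with
  | zero => intro j hj; omega
  | succ n IH =>
    intro j hj
    have hjn : j ≤ n := Nat.lt_succ_iff.mp hj
    set S : ℕ → ℝ := fun i =>
      ∑ k ∈ Finset.range (n + 1), (-1 : ℝ) ^ k * (n.choose k : ℝ) * (k : ℝ) ^ i with hS
    have hB : ∑ k ∈ Finset.range (n + 1), (-1 : ℝ) ^ k * (n.choose (k + 1) : ℝ) * ((k : ℝ) + 1) ^ j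
        = (0 : ℝ) ^ j - S j := by
      have h1 : ∑ k ∈ Finset.range (n + 2), (-1 : ℝ) ^ k * (n.choose k : ℝ) * (k : ℝ) ^ j
          = S j := by
        rw [Finset.sum_range_succ]
        simp [Nat.choose_succ_self]
        rfl
      rw [Finset.sum_range_succ'] at h1
      have h2 : ∑ x ∈ Finset.range (n + 1),
            (-1 : ℝ) ^ (x + 1) * (n.choose (x + 1) : ℝ) * ((x + 1 : ℕ) : ℝ) ^ j
          = -∑ k ∈ Finset.range (n + 1),
              (-1 : ℝ) ^ k * (n.choose (k + 1) : ℝ) * ((k : ℝ) + 1) ^ j := by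
        rw [← Finset.sum_neg_distrib]
        apply Finset.sum_congr rfl
        intro x _; push_cast; ring
      rw [h2] at h1
      simp only [pow_zero, Nat.cast_zero, Nat.choose_zero_right, Nat.cast_one] at h1
      linear_combination -h1
    have hA : ∑ k ∈ Finset.range (n + 1), (-1 : ℝ) ^ k * (n.choose k : ℝ) * ((k : ℝ) + 1) ^ j
        = ∑ i ∈ Finset.range (j + 1), (j.choose i : ℝ) * S i := by
      have expand : ∀ k : ℕ, ((k : ℝ) + 1) ^ j
          = ∑ i ∈ Finset.range (j + 1), (k : ℝ) ^ i * (j.choose i : ℝ) := by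
        intro k; simpa using add_pow (k : ℝ) 1 j
      simp_rw [expand, Finset.mul_sum, hS, Finset.mul_sum]
      rw [Finset.sum_comm]
      exact Finset.sum_congr rfl fun i _ => Finset.sum_congr rfl fun k _ => by ring
    have key : ∑ k ∈ Finset.range (n + 1 + 1), (-1 : ℝ) ^ k * ((n + 1).choose k : ℝ) * (k : ℝ) ^ j
        = S j - ∑ i ∈ Finset.range (j + 1), (j.choose i : ℝ) * S i := by
      rw [Finset.sum_range_succ', ← hA]
      have hsplit : ∑ x ∈ Finset.range (n + 1),
            (-1 : ℝ) ^ (x + 1) * (((n + 1).choose (x + 1) : ℕ) : ℝ) * ((x + 1 : ℕ) : ℝ) ^ j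
          = ∑ x ∈ Finset.range (n + 1),
              (-((-1 : ℝ) ^ x * (n.choose x : ℝ) * ((x : ℝ) + 1) ^ j)
                + -((-1 : ℝ) ^ x * (n.choose (x + 1) : ℝ) * ((x : ℝ) + 1) ^ j)) := by
        apply Finset.sum_congr rfl
        intro x _
        rw [Nat.choose_succ_succ]
        push_cast; ring
      rw [hsplit, Finset.sum_add_distrib, Finset.sum_neg_distrib, Finset.sum_neg_distrib]
      simp only [pow_zero, Nat.cast_zero, Nat.choose_zero_right, Nat.cast_one]
      linear_combination -hB
    rw [key]
    have hSzero : ∀ i, i < n → S i = 0 := fun i hi => IH i hi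
    rcases hjn.lt_or_eq with hlt | heq
    · rw [Finset.sum_eq_zero (fun i hi => by
        rw [hSzero i (lt_of_le_of_lt (Nat.lt_succ_iff.mp (Finset.mem_range.mp hi)) hlt),
          mul_zero]), hSzero j hlt]
      ring
    · subst heq
      rw [Finset.sum_range_succ,
        Finset.sum_eq_zero (fun i hi => by rw [hSzero i (Finset.mem_range.mp hi), mul_zero]),
        Nat.choose_self]
      push_cast; ring

lemma iterCongr {φ : ℝ → ℝ} {s t : Set ℝ} {x : ℝ} (hst : s =ᶠ[nhds x] t) (j : ℕ) :
    iteratedDerivWithin j φ s x = iteratedDerivWithin j φ t x := by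
  simp only [iteratedDerivWithin_eq_iteratedFDerivWithin, iteratedFDerivWithin_congr_set hst]

open Set in
theorem blend_finite_difference_bound_chain
    (n : ℕ) (hn : 1 ≤ n) (h : ℝ) (hh : 0 < h) (M b : ℝ) (hM : 0 ≤ M) (hb : 0 < b)
    (θ : ℝ) (φ : ℝ → ℝ)
    (hC : ContDiffOn ℝ (n - 1 : ℕ) φ (Icc θ (θ + n * h)))
    (hD : DifferentiableOn ℝ
      (iteratedDerivWithin (n - 1) φ (Icc θ (θ + n * h))) (Ioo θ (θ + n * h)))
    (hbound : ∀ ξ ∈ Ioo θ (θ + n * h),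
      |iteratedDerivWithin n φ (Icc θ (θ + n * h)) ξ| ≤ M * b ^ n) :
    |∑ k ∈ Finset.range (n + 1),
        (-1 : ℝ) ^ k * (n.choose k : ℝ) * φ (θ + k * h)| ≤
      M * b ^ n * (h ^ n / (n.factorial : ℝ)) *
        ∑ k ∈ Finset.Icc 1 n, (k : ℝ) ^ n * (n.choose k : ℝ) ∧
    M * b ^ n * (h ^ n / (n.factorial : ℝ)) *
        ∑ k ∈ Finset.Icc 1 n, (k : ℝ) ^ n * (n.choose k : ℝ) ≤
      M * b ^ n * (2 * n * h) ^ n / (n.factorial : ℝ) := by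
  set m := n - 1 with hm
  have hmn : m + 1 = n := Nat.succ_pred_eq_of_pos hn
  set I : Set ℝ := Icc θ (θ + n * h) with hI
  set c : ℕ → ℝ := fun j => iteratedDerivWithin j φ I θ with hc
  set P : ℝ → ℝ := fun x => ∑ j ∈ Finset.range (m + 1),
      ((x - θ) ^ j / (j.factorial : ℝ)) * c j with hP
  -- congruence of iterated derivatives between small and big interval
  have congrIter : ∀ (j k : ℕ), 1 ≤ k → k ≤ n → ∀ x ∈ Ico θ (θ + k * h),
      iteratedDerivWithin j φ (Icc θ (θ + k * h)) x = iteratedDerivWithin j φ I x := by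
    intro j k hk1 hkn x hx
    apply iterCongr
    have hmem : Iio (θ + k * h) ∈ nhds x := Iio_mem_nhds hx.2
    have hkh : (k : ℝ) * h ≤ (n : ℝ) * h :=
      mul_le_mul_of_nonneg_right (by exact_mod_cast hkn) hh.le
    filter_upwards [hmem] with y hy
    simp only [Set.mem_Icc, eq_iff_iff]
    exact ⟨fun hy' => ⟨hy'.1, hy.le.trans (by linarith)⟩, fun hy' => ⟨hy'.1, hy.le⟩⟩
  -- remainder bound
  have hR : ∀ k ∈ Finset.range (n + 1),
      |φ (θ + k * h) - P (θ + k * h)| ≤ M * b ^ n * ((k : ℝ) * h) ^ n / (n.factorial : ℝ) := by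
    intro k hk
    have hkn : k ≤ n := Nat.lt_succ_iff.mp (Finset.mem_range.mp hk)
    rcases Nat.eq_zero_or_pos k with rfl | hk1
    · have hPθ : P θ = φ θ := by
        have h0 : P θ = c 0 := by
          show ∑ j ∈ Finset.range (m + 1), ((θ : ℝ) - θ) ^ j / (j.factorial : ℝ) * c j = c 0
          rw [Finset.sum_eq_single_of_mem 0 (Finset.mem_range.mpr (by omega))]
          · simp
          · intro j _ hj; simp [zero_pow hj]
        rw [h0]
        simp [hc]
      simp [hPθ]
      positivity
    · have hθk : θ < θ + k * h := by
        have : (0 : ℝ) < (k : ℝ) * h := by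
          have : (0 : ℝ) < (k : ℝ) := by exact_mod_cast hk1
          positivity
        linarith
      have hkh : (k : ℝ) * h ≤ (n : ℝ) * h :=
        mul_le_mul_of_nonneg_right (by exact_mod_cast hkn) hh.le
      have hsub : Icc θ (θ + k * h) ⊆ I := Icc_subset_Icc_right (by linarith)
      have hIooSub : Ioo θ (θ + k * h) ⊆ Ioo θ (θ + n * h) := Ioo_subset_Ioo_right (by linarith)
      have hcd : ContDiffOn ℝ m φ (Icc θ (θ + k * h)) := hC.mono hsub
      have hdiff : DifferentiableOn ℝ
          (iteratedDerivWithin m φ (Icc θ (θ + k * h))) (Ioo θ (θ + k * h)) := by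
        intro x hx
        have h1 : DifferentiableWithinAt ℝ (iteratedDerivWithin m φ I) (Ioo θ (θ + k * h)) x :=
          (hD x (hIooSub hx)).mono hIooSub
        exact h1.congr (fun y hy => congrIter m k hk1 hkn y ⟨hy.1.le, hy.2⟩)
          (congrIter m k hk1 hkn x ⟨hx.1.le, hx.2⟩)
      obtain ⟨x', hx', hTay⟩ := taylor_mean_remainder_lagrange (n := m) hθk.ne
        (by rwa [Set.uIcc_of_le hθk.le]) (by rwa [Set.uIcc_of_le hθk.le, Set.uIoo_of_le hθk.le])
      rw [Set.uIoo_of_le hθk.le] at hx'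
      rw [Set.uIcc_of_le hθk.le] at hTay
      have hTayEq : taylorWithinEval φ m (Icc θ (θ + k * h)) θ (θ + k * h) = P (θ + k * h) := by
        rw [taylor_within_apply, hP]
        apply Finset.sum_congr rfl
        intro j hj
        rw [smul_eq_mul, congrIter j k hk1 hkn θ ⟨le_refl θ, hθk⟩]
        simp only [hc]
        ring
      have hDerEq : iteratedDerivWithin (m + 1) φ (Icc θ (θ + k * h)) x'
          = iteratedDerivWithin n φ I x' := by
        rw [congrIter (m + 1) k hk1 hkn x' ⟨hx'.1.le, hx'.2⟩, hmn]
      rw [hTayEq, hDerEq] at hTay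
      rw [hTay]
      have hb' := hbound x' (hIooSub hx')
      rw [show θ + (k : ℝ) * h - θ = (k : ℝ) * h by ring, hmn]
      have hkh0 : (0:ℝ) ≤ ((k:ℝ) * h) ^ n := by positivity
      calc |iteratedDerivWithin n φ I x' * ((k:ℝ) * h) ^ n / (n.factorial : ℝ)|
          = |iteratedDerivWithin n φ I x'| * ((k:ℝ) * h) ^ n / (n.factorial : ℝ) := by
            rw [abs_div, abs_mul, abs_of_nonneg hkh0,
              abs_of_nonneg (by positivity : (0:ℝ) ≤ (n.factorial : ℝ))]
        _ ≤ M * b ^ n * ((k:ℝ) * h) ^ n / (n.factorial : ℝ) := by gcongr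
  -- the Taylor polynomial part vanishes in the alternating sum
  have hPzero : ∑ k ∈ Finset.range (n + 1),
      (-1 : ℝ) ^ k * (n.choose k : ℝ) * P (θ + k * h) = 0 := by
    have hPk : ∀ k : ℕ, P (θ + k * h)
        = ∑ j ∈ Finset.range (m + 1), ((k : ℝ) ^ j * h ^ j / (j.factorial : ℝ)) * c j := by
      intro k
      show ∑ j ∈ Finset.range (m + 1), (θ + (k : ℝ) * h - θ) ^ j / (j.factorial : ℝ) * c j = _
      apply Finset.sum_congr rfl
      intro j _
      rw [show θ + (k : ℝ) * h - θ = (k : ℝ) * h by ring, mul_pow]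
    calc ∑ k ∈ Finset.range (n + 1), (-1 : ℝ) ^ k * (n.choose k : ℝ) * P (θ + k * h)
        = ∑ k ∈ Finset.range (n + 1), ∑ j ∈ Finset.range (m + 1),
            (-1 : ℝ) ^ k * (n.choose k : ℝ) * (((k : ℝ) ^ j * h ^ j / (j.factorial : ℝ)) * c j) := by
          apply Finset.sum_congr rfl
          intro k _
          rw [hPk k, Finset.mul_sum]
      _ = ∑ j ∈ Finset.range (m + 1), ∑ k ∈ Finset.range (n + 1),
            (-1 : ℝ) ^ k * (n.choose k : ℝ) * (((k : ℝ) ^ j * h ^ j / (j.factorial : ℝ)) * c j) :=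
          Finset.sum_comm
      _ = ∑ j ∈ Finset.range (m + 1), (h ^ j / (j.factorial : ℝ) * c j) *
            ∑ k ∈ Finset.range (n + 1), (-1 : ℝ) ^ k * (n.choose k : ℝ) * (k : ℝ) ^ j := by
          apply Finset.sum_congr rfl
          intro j _
          rw [Finset.mul_sum]
          exact Finset.sum_congr rfl fun k _ => by ring
      _ = 0 := by
          apply Finset.sum_eq_zero
          intro j hj
          rw [altA n j (by have := Finset.mem_range.mp hj; omega), mul_zero]
  have hsplit : ∑ k ∈ Finset.range (n + 1), (-1 : ℝ) ^ k * (n.choose k : ℝ) * φ (θ + k * h)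
      = ∑ k ∈ Finset.range (n + 1),
          (-1 : ℝ) ^ k * (n.choose k : ℝ) * (φ (θ + k * h) - P (θ + k * h)) := by
    calc ∑ k ∈ Finset.range (n + 1), (-1 : ℝ) ^ k * (n.choose k : ℝ) * φ (θ + k * h)
        = ∑ k ∈ Finset.range (n + 1),
            ((-1 : ℝ) ^ k * (n.choose k : ℝ) * (φ (θ + k * h) - P (θ + k * h))
              + (-1 : ℝ) ^ k * (n.choose k : ℝ) * P (θ + k * h)) := by
          exact Finset.sum_congr rfl fun k _ => by ring
      _ = _ := by rw [Finset.sum_add_distrib, hPzero, add_zero]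
  have hrange : Finset.range (n + 1) = insert 0 (Finset.Icc 1 n) := by
    ext x; simp [Nat.lt_succ_iff]; omega
  have hn0 : n ≠ 0 := by omega
  constructor
  · calc |∑ k ∈ Finset.range (n + 1), (-1 : ℝ) ^ k * (n.choose k : ℝ) * φ (θ + k * h)|
        = |∑ k ∈ Finset.range (n + 1),
            (-1 : ℝ) ^ k * (n.choose k : ℝ) * (φ (θ + k * h) - P (θ + k * h))| := by rw [hsplit]
      _ ≤ ∑ k ∈ Finset.range (n + 1),
            |(-1 : ℝ) ^ k * (n.choose k : ℝ) * (φ (θ + k * h) - P (θ + k * h))| :=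
          Finset.abs_sum_le_sum_abs _ _
      _ ≤ ∑ k ∈ Finset.range (n + 1),
            (n.choose k : ℝ) * (M * b ^ n * ((k : ℝ) * h) ^ n / (n.factorial : ℝ)) := by
          apply Finset.sum_le_sum
          intro k hk
          rw [abs_mul, abs_mul, abs_pow, abs_neg, abs_one, one_pow, one_mul, Nat.abs_cast]
          exact mul_le_mul_of_nonneg_left (hR k hk) (Nat.cast_nonneg _)
      _ = M * b ^ n * (h ^ n / (n.factorial : ℝ)) *
            ∑ k ∈ Finset.Icc 1 n, (k : ℝ) ^ n * (n.choose k : ℝ) := by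
          rw [hrange, Finset.sum_insert (by simp), Finset.mul_sum]
          rw [show ((n.choose 0 : ℕ) : ℝ) * (M * b ^ n * (((0 : ℕ) : ℝ) * h) ^ n / (n.factorial : ℝ))
            = 0 by simp [zero_pow hn0], zero_add]
          apply Finset.sum_congr rfl
          intro k _
          rw [mul_pow]
          ring
  · have hsum : ∑ k ∈ Finset.Icc 1 n, (k : ℝ) ^ n * (n.choose k : ℝ)
        ≤ 2 ^ n * (n : ℝ) ^ n := by
      calc ∑ k ∈ Finset.Icc 1 n, (k : ℝ) ^ n * (n.choose k : ℝ)
          ≤ ∑ k ∈ Finset.Icc 1 n, (n : ℝ) ^ n * (n.choose k : ℝ) := by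
            apply Finset.sum_le_sum
            intro k hk
            have hkn : (k : ℝ) ≤ (n : ℝ) := by
              exact_mod_cast (Finset.mem_Icc.mp hk).2
            exact mul_le_mul_of_nonneg_right
              (pow_le_pow_left₀ (Nat.cast_nonneg _) hkn n) (Nat.cast_nonneg _)
        _ = (n : ℝ) ^ n * ∑ k ∈ Finset.Icc 1 n, (n.choose k : ℝ) := by rw [Finset.mul_sum]
        _ ≤ (n : ℝ) ^ n * 2 ^ n := by
            apply mul_le_mul_of_nonneg_left _ (by positivity)
            have hsub : Finset.Icc 1 n ⊆ Finset.range (n + 1) := by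
              intro x hx; simp only [Finset.mem_Icc] at hx; simp [Nat.lt_succ_iff]; omega
            calc ∑ k ∈ Finset.Icc 1 n, (n.choose k : ℝ)
                ≤ ∑ k ∈ Finset.range (n + 1), (n.choose k : ℝ) :=
                  Finset.sum_le_sum_of_subset_of_nonneg hsub fun _ _ _ => Nat.cast_nonneg _
              _ = 2 ^ n := by
                  rw [← Nat.cast_sum, Nat.sum_range_choose]
                  push_cast
                  rfl
        _ = 2 ^ n * (n : ℝ) ^ n := mul_comm _ _
    calc M * b ^ n * (h ^ n / (n.factorial : ℝ)) *
          ∑ k ∈ Finset.Icc 1 n, (k : ℝ) ^ n * (n.choose k : ℝ)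
        ≤ M * b ^ n * (h ^ n / (n.factorial : ℝ)) * (2 ^ n * (n : ℝ) ^ n) := by
          apply mul_le_mul_of_nonneg_left hsum (by positivity)
      _ = M * b ^ n * (2 * n * h) ^ n / (n.factorial : ℝ) := by
          rw [mul_pow, mul_pow]
          ring
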